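/- Let z_1, ..., z_n be scalars with mean z̄, and S ⊆ [n] of size n−f with complement T of size f, where 0 < f < n. Then by Jensen's inequality, ∑_{i∈T}(z_i − z̄)² ≥ ((n−f)²/f) · (z̄_S − z̄)², where z̄_S is the mean over S. -/

import Mathlib

/-- Jensen-type bound: the sum of squared deviations of the complement `T = Sᶜ` from the
global mean dominates `((n-f)²/f)` times the squared deviation of the subset mean. -/
theorem complement_jensen_bound {n f : ℕ} (hf : 0 < f) (hfn : f < n)
    (z : Fin n → ℝ) (S : Finset (Fin n)) (hS : S.card = n - f) :
    ∑ i ∈ Sᶜ, (z i - (n : ℝ)⁻¹ * ∑ j, z j) ^ 2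
      ≥ (((n - f : ℕ) : ℝ) ^ 2 / (f : ℝ)) *
          (((n - f : ℕ) : ℝ)⁻¹ * ∑ i ∈ S, z i - (n : ℝ)⁻¹ * ∑ j, z j) ^ 2 := by
  have hn : 0 < n := lt_trans hf hfn
  have hTcard : (Sᶜ : Finset (Fin n)).card = f := by
    have := Finset.card_compl S
    rw [hS] at this
    simp [this, Nat.sub_sub_self hfn.le]
  have hnf : ((n - f : ℕ) : ℝ) ≠ 0 := by
    have : 0 < n - f := Nat.sub_pos_of_lt hfn
    positivity
  have hfR : (0 : ℝ) < f := by exact_mod_cast hf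
  have hnR : ((n : ℝ)) ≠ 0 := by positivity
  -- Cauchy-Schwarz / Jensen on T
  have key := sq_sum_le_card_mul_sum_sq (s := Sᶜ) (f := fun i => z i - (n : ℝ)⁻¹ * ∑ j, z j)
  rw [hTcard] at key
  -- compute the sum over T
  have hsplit : ∑ i ∈ Sᶜ, (z i - (n : ℝ)⁻¹ * ∑ j, z j)
      = -(((n - f : ℕ) : ℝ) * (((n - f : ℕ) : ℝ)⁻¹ * ∑ i ∈ S, z i - (n : ℝ)⁻¹ * ∑ j, z j)) := by
    have hTS : ∑ i ∈ Sᶜ, z i = (∑ j, z j) - ∑ i ∈ S, z i := by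
      have := Finset.sum_add_sum_compl S z
      linarith
    rw [Finset.sum_sub_distrib, Finset.sum_const, hTcard, hTS]
    have hcast : ((n : ℝ)) = ((n - f : ℕ) : ℝ) + (f : ℝ) := by
      rw [← Nat.cast_add, Nat.sub_add_cancel hfn.le]
    field_simp
    rw [hcast]
    have hne : ((n - f : ℕ) : ℝ) + (f : ℝ) ≠ 0 := hcast ▸ hnR
    have hinv := mul_inv_cancel₀ hne
    linear_combination (-((f : ℝ) * ∑ j, z j)) * hinv
  rw [hsplit] at key
  have key2 : (((n - f : ℕ) : ℝ) * (((n - f : ℕ) : ℝ)⁻¹ * ∑ i ∈ S, z i - (n : ℝ)⁻¹ * ∑ j, z j)) ^ 2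
      ≤ (f : ℝ) * ∑ i ∈ Sᶜ, (z i - (n : ℝ)⁻¹ * ∑ j, z j) ^ 2 := by
    calc _ = (-(((n - f : ℕ) : ℝ) * (((n - f : ℕ) : ℝ)⁻¹ * ∑ i ∈ S, z i - (n : ℝ)⁻¹ * ∑ j, z j))) ^ 2 := by ring
    _ ≤ _ := key
  rw [mul_pow] at key2
  rw [ge_iff_le, div_mul_eq_mul_div, div_le_iff₀ hfR]
  linarith
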